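/- For every n ≥ 1, the no-signaling cone NS_n equals the n-fold maximal tensor product of Sq with itself; that is, x : S^n → ℝ lies in NS_n if and only if for all g_1,…,g_n ∈ Sq* one has ∑_{v∈S^n} (∏_{j=1}^n g_{j,v_j}) x^v ≥ 0. -/

import Mathlib

open Finset

noncomputable section

/-- The dual cone of a set of real-valued functions on a finite index set. -/
def dualCone {I : Type*} [Fintype I] (C : Set (I → ℝ)) : Set (I → ℝ) :=
  {g | ∀ x ∈ C, 0 ≤ ∑ i, g i * x i}

/-- The convex cone generated by a set: all finite nonnegative linear combinations. -/
def coneHull {E : Type*} [AddCommMonoid E] [Module ℝ E] (X : Set E) : Set E :=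
  {y | ∃ (m : ℕ) (c : Fin m → ℝ) (v : Fin m → E),
    (∀ i, 0 ≤ c i) ∧ (∀ i, v i ∈ X) ∧ y = ∑ i, c i • v i}

/-- The square cone `Sq ⊆ ℝ^S`, where `S = {-1,0,+1}` is `SignType`. -/
def Sq : Set (SignType → ℝ) :=
  {x | -x 0 ≤ x (-1) ∧ x (-1) ≤ x 0 ∧ -x 0 ≤ x 1 ∧ x 1 ≤ x 0}

/-- `hF v t s = h_v(t,s)`: equals `t` if `v = s`, `1` if `v = 0`, and `0` if `v = -s`. -/
def hF (v t s : SignType) : ℝ := if v = s then (t : ℝ) else if v = 0 then 1 else 0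

/-- The no-signaling cone `NS_n`. -/
def NS (n : ℕ) : Set ((Fin n → SignType) → ℝ) :=
  {x | ∀ s t : Fin n → SignType, (∀ j, s j ≠ 0) → (∀ j, t j ≠ 0) →
    0 ≤ ∑ v : Fin n → SignType, (∏ j, hF (v j) (t j) (s j)) * x v}

/-- Local deterministic strategies: `a j 0 = 1` and `a j (±1) ∈ {-1,+1}`. -/
def IsDet {n : ℕ} (a : Fin n → SignType → ℝ) : Prop :=
  ∀ j, a j 0 = 1 ∧ (a j (-1) = -1 ∨ a j (-1) = 1) ∧ (a j 1 = -1 ∨ a j 1 = 1)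

/-- The Bell cone `B_n`: the convex cone generated by the local deterministic points. -/
def Bell (n : ℕ) : Set ((Fin n → SignType) → ℝ) :=
  coneHull {x | ∃ a : Fin n → SignType → ℝ, IsDet a ∧ x = fun s => ∏ j, a j (s j)}

/-- The tensor `F_{st}` (lowered indices). -/
def Flo (s t : SignType) : ℝ :=
  if s = 0 then (if t = 0 then 1 else 0)
  else if t = 0 then 0
  else if s = 1 ∧ t = 1 then -(1/2) else 1/2

/-- The tensor `F^{st}` (raised indices). -/
def Fup (s t : SignType) : ℝ :=
  if s = 0 then (if t = 0 then 1 else 0)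
  else if t = 0 then 0
  else if s = 1 ∧ t = 1 then -1 else 1

lemma sum_signType (f : SignType → ℝ) : ∑ i, f i = f 0 + f (-1) + f 1 := by
  rw [show (univ : Finset SignType) = {0, -1, 1} from SignType.univ_eq]
  simp [Finset.sum_insert, add_assoc]

lemma dual_bound {g : SignType → ℝ} (hg : g ∈ dualCone Sq) :
    |g (-1)| + |g 1| ≤ g 0 := by
  have key : ∀ ε1 ε2 : ℝ, ε1 = 1 ∨ ε1 = -1 → ε2 = 1 ∨ ε2 = -1 →
      0 ≤ g 0 + g (-1) * ε1 + g 1 * ε2 := by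
    intro ε1 ε2 h1 h2
    have hx : (fun v : SignType => if v = 0 then 1 else if v = -1 then ε1 else ε2) ∈ Sq := by
      refine ⟨?_, ?_, ?_, ?_⟩
      · simp; rcases h1 with h | h <;> simp [h]
      · simp; rcases h1 with h | h <;> simp [h]
      · simp; rcases h2 with h | h <;> simp [h]
      · simp; rcases h2 with h | h <;> simp [h]
    have := hg _ hx
    rw [sum_signType] at this
    simpa [mul_comm] using this
  have h1 := key (if 0 ≤ g (-1) then -1 else 1) (if 0 ≤ g 1 then -1 else 1)
    (by split <;> simp) (by split <;> simp)
  rcases le_or_gt 0 (g (-1)) with ha | ha <;> rcases le_or_gt 0 (g 1) with hb | hb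
  · rw [abs_of_nonneg ha, abs_of_nonneg hb]; simp [ha, hb] at h1; linarith
  · rw [abs_of_nonneg ha, abs_of_neg hb]; simp [ha, hb.not_ge] at h1; linarith
  · rw [abs_of_neg ha, abs_of_nonneg hb]; simp [ha.not_ge, hb] at h1; linarith
  · rw [abs_of_neg ha, abs_of_neg hb]; simp [ha.not_ge, hb.not_ge] at h1; linarith

lemma dual_decomp {g : SignType → ℝ} (hg : g ∈ dualCone Sq) :
    ∃ (c : Fin 4 → ℝ) (S T : Fin 4 → SignType),
      (∀ k, 0 ≤ c k) ∧ (∀ k, S k ≠ 0) ∧ (∀ k, T k ≠ 0) ∧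
      ∀ v, g v = ∑ k, c k * hF v (T k) (S k) := by
  have hb := dual_bound hg
  refine ⟨![|g (-1)|, |g 1|, (g 0 - |g (-1)| - |g 1|)/2, (g 0 - |g (-1)| - |g 1|)/2],
    ![-1, 1, 1, 1],
    ![if 0 ≤ g (-1) then 1 else -1, if 0 ≤ g 1 then 1 else -1, 1, -1], ?_, ?_, ?_, ?_⟩
  · intro k; fin_cases k <;> simp [abs_nonneg] <;> linarith [abs_nonneg (g (-1)), abs_nonneg (g 1)]
  · intro k; fin_cases k <;> simp
  · intro k; fin_cases k <;> simp <;> split_ifs <;> simp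
  · intro v
    rw [Fin.sum_univ_four]
    rcases le_or_gt 0 (g (-1)) with ha | ha <;> rcases le_or_gt 0 (g 1) with hb' | hb' <;>
      cases v <;>
      simp [hF, ha, hb', not_le, abs_of_nonneg, abs_of_neg] <;> (try ring) <;>
      (try (split_ifs with h
            · linarith
            · simp))

/-- The no-signaling cone equals the n-fold maximal tensor product of `Sq` with itself. -/
theorem statement4 (n : ℕ) (hn : 1 ≤ n) (x : (Fin n → SignType) → ℝ) :
    x ∈ NS n ↔ ∀ g : Fin n → SignType → ℝ, (∀ j, g j ∈ dualCone Sq) →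
      0 ≤ ∑ v : Fin n → SignType, (∏ j, g j (v j)) * x v := by
  constructor
  · intro hx g hg
    have hdec := fun j => dual_decomp (hg j)
    choose c S T h1 h2 h3 h4 using hdec
    have key : ∀ v : Fin n → SignType, (∏ j, g j (v j)) =
        ∑ κ : Fin n → Fin 4, (∏ j, c j (κ j)) * ∏ j, hF (v j) (T j (κ j)) (S j (κ j)) := by
      intro v
      calc ∏ j, g j (v j) = ∏ j, ∑ k, c j k * hF (v j) (T j k) (S j k) :=
            Finset.prod_congr rfl fun j _ => h4 j (v j)
        _ = ∑ κ ∈ Fintype.piFinset (fun _ : Fin n => (univ : Finset (Fin 4))),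
              ∏ j, c j (κ j) * hF (v j) (T j (κ j)) (S j (κ j)) := Finset.prod_univ_sum _ _
        _ = ∑ κ : Fin n → Fin 4, (∏ j, c j (κ j)) * ∏ j, hF (v j) (T j (κ j)) (S j (κ j)) := by
            rw [Fintype.piFinset_univ]
            exact Finset.sum_congr rfl fun κ _ => Finset.prod_mul_distrib
    simp only [key, Finset.sum_mul]
    rw [Finset.sum_comm]
    apply Finset.sum_nonneg
    intro κ _
    have hns := hx (fun j => S j (κ j)) (fun j => T j (κ j))
      (fun j => h2 j (κ j)) (fun j => h3 j (κ j))
    have : ∑ v : Fin n → SignType, (∏ j, c j (κ j)) * (∏ j, hF (v j) (T j (κ j)) (S j (κ j))) * x v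
        = (∏ j, c j (κ j)) * ∑ v : Fin n → SignType, (∏ j, hF (v j) (T j (κ j)) (S j (κ j))) * x v := by
      rw [Finset.mul_sum]; exact Finset.sum_congr rfl fun v _ => by ring
    rw [this]
    exact mul_nonneg (Finset.prod_nonneg fun j _ => h1 j (κ j)) hns
  · intro h s t hs ht
    have hg : ∀ j, (fun v => hF v (t j) (s j)) ∈ dualCone Sq := by
      intro j y hy
      obtain ⟨hy1, hy2, hy3, hy4⟩ := hy
      rw [sum_signType]
      rcases hsj : s j with _ | _ | _
      · exact absurd hsj (hs j)
      all_goals rcases htj : t j with _ | _ | _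
      · exact absurd htj (ht j)
      pick_goal 3
      · exact absurd htj (ht j)
      all_goals simp [hF] <;> linarith
    have := h (fun j => fun v => hF v (t j) (s j)) hg
    simpa using this
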